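/- Let f : ℝⁿ → ℝⁿ be a vector field with quadratic components, i.e., f(x) = Q(x) + Bx + c where each component of Q is a quadratic form, B is a matrix and c a vector. If x̃ satisfies the Kahan discretization equation (x̃ - x)/(2ε) = Q(x, x̃) + (1/2)B(x + x̃) + c, with Q(x,x̃) = (1/2)(Q(x+x̃) - Q(x) - Q(x̃)) the polarization of Q, and if the matrix I - ε f'(x) is invertible, then x̃ = x + 2ε (I - ε f'(x))^{-1} f(x). -/

import Mathlib

open ContinuousLinearMap Matrix


/-- The Jacobian matrix `f'(x)` of a map `f : ℝⁿ → ℝⁿ` in standard coordinates. -/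
noncomputable def jacobian {n : ℕ} (f : (Fin n → ℝ) → (Fin n → ℝ)) (x : Fin n → ℝ) :
    Matrix (Fin n) (Fin n) ℝ :=
  Matrix.of fun i j => fderiv ℝ f x (Pi.single j 1) i

/-- explicit form of the Kahan map: let `f(x) = Q(x) + Bx + c` with each
component of `Q` a quadratic form. If `y` satisfies the Kahan discretization equation
`(y - x)/(2ε) = Q(x,y) + (1/2)B(x+y) + c`, with `Q(x,y) = (1/2)(Q(x+y) - Q(x) - Q(y))`,
and `I - ε f'(x)` is invertible, then `y = x + 2ε (I - ε f'(x))⁻¹ f(x)`. -/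
theorem kahan_explicit_form {n : ℕ}
    (Q : (Fin n → ℝ) → (Fin n → ℝ)) (B : Matrix (Fin n) (Fin n) ℝ) (c : Fin n → ℝ)
    (hQ : ∃ A : Fin n → Matrix (Fin n) (Fin n) ℝ,
      ∀ x i, Q x i = dotProduct x ((A i).mulVec x))
    (f : (Fin n → ℝ) → (Fin n → ℝ)) (hf : ∀ x, f x = Q x + B.mulVec x + c)
    (ε : ℝ) (x y : Fin n → ℝ)
    (hkahan : y - x = (2 * ε) •
      ((1/2 : ℝ) • (Q (x + y) - Q x - Q y) + (1/2 : ℝ) • B.mulVec (x + y) + c))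
    (hinv : IsUnit (1 - ε • jacobian f x)) :
    y = x + (2 * ε) • (1 - ε • jacobian f x)⁻¹.mulVec (f x) := by
  obtain ⟨A, hA⟩ := hQ
  -- per component derivative
  have hcomp : ∀ i : Fin n, ∃ D : (Fin n → ℝ) →L[ℝ] ℝ, HasFDerivAt (fun z => f z i) D x ∧
      ∀ v, D v = v ⬝ᵥ (A i).mulVec x + x ⬝ᵥ (A i).mulVec v + B.mulVec v i := by
    intro i
    have hfi : (fun z => f z i) = fun z : Fin n → ℝ =>
        (∑ j, z j * ∑ k, A i j k * z k) + ((∑ j, B i j * z j) + c i) := by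
      funext z
      simp [hf, hA, dotProduct, Matrix.mulVec, add_assoc]
    have h1 : HasFDerivAt (fun z : Fin n → ℝ => ∑ j, z j * ∑ k, A i j k * z k)
        (∑ j : Fin n, (x j • (∑ k : Fin n, A i j k • (proj k : (Fin n → ℝ) →L[ℝ] ℝ))
          + (∑ k, A i j k * x k) • (proj j : (Fin n → ℝ) →L[ℝ] ℝ))) x := by
      apply HasFDerivAt.fun_sum
      intro j _
      exact (hasFDerivAt_apply j x).mul
        (HasFDerivAt.fun_sum fun k _ => (hasFDerivAt_apply k x).const_mul (A i j k))
    have h2 : HasFDerivAt (fun z : Fin n → ℝ => (∑ j, B i j * z j) + c i)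
        (∑ j : Fin n, B i j • (proj j : (Fin n → ℝ) →L[ℝ] ℝ)) x := by
      apply HasFDerivAt.add_const
      exact HasFDerivAt.fun_sum fun j _ => (hasFDerivAt_apply j x).const_mul (B i j)
    refine ⟨_, hfi ▸ h1.fun_add h2, ?_⟩
    intro v
    simp only [ContinuousLinearMap.add_apply, ContinuousLinearMap.sum_apply,
      ContinuousLinearMap.smul_apply, proj_apply, smul_eq_mul,
      dotProduct, Matrix.mulVec, Finset.mul_sum, Finset.sum_mul]
    rw [Finset.sum_add_distrib]
    congr 1
    rw [add_comm]
    congr 1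
    exact Finset.sum_congr rfl fun j _ => Finset.sum_congr rfl fun k _ => by ring
  choose D hD hDval using hcomp
  have hder : HasFDerivAt f (ContinuousLinearMap.pi D) x :=
    hasFDerivAt_pi.2 hD |>.congr_of_eventuallyEq (by filter_upwards with z using rfl)
  have hfd := hder.fderiv
  -- jacobian mulVec
  have hJ : ∀ v, (jacobian f x).mulVec v = ContinuousLinearMap.pi D v := by
    intro v
    funext i
    have hv : v = ∑ j, v j • (Pi.single j (1 : ℝ) : Fin n → ℝ) := by
      have := Finset.univ_sum_single v
      rw [← this]
      exact Finset.sum_congr rfl fun j _ => by simp [← Pi.single_smul]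
    calc (jacobian f x).mulVec v i = ∑ j, (fderiv ℝ f x (Pi.single j 1) i) * v j := rfl
    _ = ∑ j, v j * (ContinuousLinearMap.pi D (Pi.single j 1) i) := by
        rw [hfd]; exact Finset.sum_congr rfl fun j _ => mul_comm _ _
    _ = ContinuousLinearMap.pi D v i := by
        conv_rhs => rw [hv]
        simp
  have hJval : ∀ v, (jacobian f x).mulVec v =
      fun i => v ⬝ᵥ (A i).mulVec x + x ⬝ᵥ (A i).mulVec v + B.mulVec v i := by
    intro v; rw [hJ v]; funext i; exact hDval i v
  -- main algebra
  have key : (1 - ε • jacobian f x).mulVec (y - x) = (2 * ε) • f x := by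
    funext i
    have hk := congrFun hkahan i
    simp only [Pi.sub_apply, Pi.smul_apply, Pi.add_apply, smul_eq_mul, hA,
      add_dotProduct, dotProduct_add, Matrix.mulVec_add] at hk
    have hjv := congrFun (hJval (y - x)) i
    simp only [Matrix.sub_mulVec, Matrix.one_mulVec, Matrix.smul_mulVec,
      Pi.sub_apply, Pi.smul_apply, smul_eq_mul, Pi.add_apply]
    rw [hjv]
    simp only [sub_dotProduct, dotProduct_sub, Matrix.mulVec_sub,
      Pi.sub_apply, Pi.add_apply, smul_eq_mul, hf, hA]
    ring_nf
    ring_nf at hk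
    linarith
  -- conclude
  have hdet : IsUnit (1 - ε • jacobian f x).det :=
    (Matrix.isUnit_iff_isUnit_det _).mp hinv
  have : (1 - ε • jacobian f x)⁻¹.mulVec ((1 - ε • jacobian f x).mulVec (y - x)) = y - x := by
    rw [Matrix.mulVec_mulVec, Matrix.nonsing_inv_mul _ hdet, Matrix.one_mulVec]
  rw [key, Matrix.mulVec_smul] at this
  rw [this]
  simp
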